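/- For any K ≥ 2 and weights w_1,...,w_K ∈ (0,1), the inequality (∑_{ℓ=1}^K w_ℓ) · (∏_{j ≠ k} (1 - w_j)) < 1 holds for every k ∈ {1,...,K}. -/
import Mathlib

lemma aux_stmt_0 {K : ℕ} (w : Fin K → ℝ) (hw : ∀ j, w j ∈ Set.Ioo (0 : ℝ) 1)
    (S : Finset (Fin K)) : ∀ c : ℝ, c < 1 →
    (c + ∑ j ∈ S, w j) * ∏ j ∈ S, (1 - w j) < 1 := by
  induction S using Finset.induction_on with
  | empty => intro c hc; simpa using hc
  | @insert a S ha ih =>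
    intro c hc
    rw [Finset.sum_insert ha, Finset.prod_insert ha]
    have hwa := hw a
    have hP : (0 : ℝ) ≤ ∏ j ∈ S, (1 - w j) :=
      Finset.prod_nonneg fun j _ => by linarith [(hw j).2]
    have hs : (0 : ℝ) ≤ ∑ j ∈ S, w j :=
      Finset.sum_nonneg fun j _ => (hw j).1.le
    have hc' : (c + w a) * (1 - w a) < 1 := by nlinarith [hwa.1, hwa.2]
    have hkey : (c + (w a + ∑ j ∈ S, w j)) * (1 - w a)
        ≤ (c + w a) * (1 - w a) + ∑ j ∈ S, w j := by
      nlinarith [hwa.1, hwa.2]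
    calc (c + (w a + ∑ j ∈ S, w j)) * ((1 - w a) * ∏ j ∈ S, (1 - w j))
        = ((c + (w a + ∑ j ∈ S, w j)) * (1 - w a)) * ∏ j ∈ S, (1 - w j) := by ring
      _ ≤ ((c + w a) * (1 - w a) + ∑ j ∈ S, w j) * ∏ j ∈ S, (1 - w j) :=
          mul_le_mul_of_nonneg_right hkey hP
      _ < 1 := ih _ hc'

/-- For any K ≥ 2 and weights w_1,...,w_K ∈ (0,1),
    (∑_ℓ w_ℓ) · ∏_{j ≠ k} (1 - w_j) < 1 for every k. -/
theorem stmt_0 {K : ℕ} (hK : 2 ≤ K) (w : Fin K → ℝ)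
    (hw : ∀ k, w k ∈ Set.Ioo (0 : ℝ) 1) (k : Fin K) :
    (∑ ℓ, w ℓ) * ∏ j ∈ Finset.univ.erase k, (1 - w j) < 1 := by
  have h := aux_stmt_0 w hw (Finset.univ.erase k) (w k) (hw k).2
  rwa [Finset.add_sum_erase _ _ (Finset.mem_univ k)] at h
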